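/- Let F = GF(q), let α ∈ F have multiplicative order n, let 0 < r < n, and let C_RS(n,r) be the [n, n−r] Reed–Solomon code over F with parity-check matrix H = (α^{sj}) for 0 ≤ s ≤ r−1, 0 ≤ j ≤ n−1. If ℓ and τ are positive integers with r ≥ τ + ⌈τ/ℓ⌉, then there is an (ℓ,τ)-burst list decoder for C_RS(n,r); equivalently, there do not exist ℓ+1 distinct τ-bursts e_0, e_1, …, e_ℓ ∈ F^n with equal syndromes H·e_0^T = H·e_1^T = ⋯ = H·e_ℓ^T. Hence Reed–Solomon codes attain the generalized Reiger bound r ≥ τ + ⌈τ/ℓ⌉ for linear codes. -/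

import Mathlib

/-- A word `e ∈ F^n` is a `τ`-burst if its support is contained in `τ`
consecutive positions (equivalently, `e = 0` or the first and last nonzero
indexes `i ≤ j` satisfy `j - i < τ`). -/
def IsBurst {F : Type*} [Zero F] {n : ℕ} (τ : ℕ) (e : Fin n → F) : Prop :=
  ∃ a : ℕ, ∀ j : Fin n, e j ≠ 0 → a ≤ (j : ℕ) ∧ (j : ℕ) < a + τ

/-- A decoder `D` (returning lists, i.e. finite sets, of codewords) corrects any
single `τ`-burst error. -/
def Corrects {F : Type*} [AddCommGroup F] {n : ℕ}
    (D : (Fin n → F) → Finset (Fin n → F)) (C : Set (Fin n → F)) (τ : ℕ) : Prop :=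
  ∀ c ∈ C, ∀ e : Fin n → F, IsBurst τ e → c ∈ D (c + e)

/-- A decoder `D` detects any single `τ`-burst error: on input `c + e` it
returns `{c}` if `e = 0` and `∅` otherwise. -/
def Detects {F : Type*} [AddCommGroup F] {n : ℕ}
    (D : (Fin n → F) → Finset (Fin n → F)) (C : Set (Fin n → F)) (τ : ℕ) : Prop :=
  ∀ c ∈ C, ∀ e : Fin n → F, IsBurst τ e →
    (e = 0 → D (c + e) = {c}) ∧ (e ≠ 0 → D (c + e) = ∅)

/-- `C` has an `(ℓ,τ)`-burst list decoder: a decoder with lists of codewords of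
size at most `ℓ` that corrects any single `τ`-burst error. -/
def HasBurstListDecoder {F : Type*} [AddCommGroup F] {n : ℕ}
    (C : Set (Fin n → F)) (ℓ τ : ℕ) : Prop :=
  ∃ D : (Fin n → F) → Finset (Fin n → F),
    (∀ y, (D y : Set (Fin n → F)) ⊆ C) ∧ (∀ y, (D y).card ≤ ℓ) ∧ Corrects D C τ

/-- `C` has a decoder detecting any single `τ`-burst error. -/
def HasBurstDetector {F : Type*} [AddCommGroup F] {n : ℕ}
    (C : Set (Fin n → F)) (τ : ℕ) : Prop :=
  ∃ D : (Fin n → F) → Finset (Fin n → F),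
    (∀ y, (D y : Set (Fin n → F)) ⊆ C) ∧ Detects D C τ


section RSReigerAux

open Polynomial Finset

lemma RS_basis_coeff {F : Type*} [Field F] {r : ℕ} (v : Fin r → F)
    (hv : Function.Injective v) (s : Fin r) :
    (Lagrange.basis Finset.univ v s).coeff (r - 1) =
      ∏ t ∈ Finset.univ.erase s, (v s - v t)⁻¹ := by
  have hvs : Set.InjOn v (Finset.univ : Finset (Fin r)) := hv.injOn
  have hmem : s ∈ (Finset.univ : Finset (Fin r)) := mem_univ s
  have hnd : (Lagrange.basis Finset.univ v s).natDegree = r - 1 := by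
    rw [Lagrange.natDegree_basis hvs hmem, card_univ, Fintype.card_fin]
  rw [← hnd, coeff_natDegree, Lagrange.basis, leadingCoeff_prod]
  refine Finset.prod_congr rfl fun t ht => ?_
  rw [Lagrange.basisDivisor, leadingCoeff_mul, leadingCoeff_C,
    (monic_X_sub_C (v t)).leadingCoeff, mul_one]

lemma RS_lagrange_sum_zero {F : Type*} [Field F] {r : ℕ} (v : Fin r → F)
    (hv : Function.Injective v) (P : Polynomial F) (hdeg : P.degree < ((r - 1 : ℕ) : WithBot ℕ)) :
    ∑ s : Fin r, P.eval (v s) * ∏ t ∈ Finset.univ.erase s, (v s - v t)⁻¹ = 0 := by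
  have hvs : Set.InjOn v (Finset.univ : Finset (Fin r)) := hv.injOn
  have hcard : #(Finset.univ : Finset (Fin r)) = r := by rw [card_univ, Fintype.card_fin]
  have hdeg' : P.degree < (#(Finset.univ : Finset (Fin r)) : ℕ) := by
    rw [hcard]
    exact lt_of_lt_of_le hdeg (by exact_mod_cast Nat.cast_le.mpr (Nat.sub_le r 1))
  have hint := Lagrange.eq_interpolate hvs hdeg'
  have h0 : P.coeff (r - 1) = 0 := coeff_eq_zero_of_degree_lt hdeg
  rw [hint] at h0
  rw [Lagrange.interpolate_apply, finset_sum_coeff] at h0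
  rw [← h0]
  refine Finset.sum_congr rfl fun s _ => ?_
  rw [coeff_C_mul, RS_basis_coeff v hv s]

/-- The burst polynomial: coefficients of `e` in the window `[a, a+τ)`. -/
noncomputable def burstPoly {F : Type*} [Semiring F] {n : ℕ} (e : Fin n → F) (a τ : ℕ) :
    Polynomial F :=
  ∑ t ∈ Finset.range τ, Polynomial.C (if h : a + t < n then e ⟨a + t, h⟩ else 0) *
    Polynomial.X ^ t

lemma burstPoly_coeff {F : Type*} [Semiring F] {n : ℕ} (e : Fin n → F) (a τ : ℕ)
    {t : ℕ} (ht : t < τ) :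
    (burstPoly e a τ).coeff t = if h : a + t < n then e ⟨a + t, h⟩ else 0 := by
  rw [burstPoly, finset_sum_coeff]
  rw [Finset.sum_eq_single t]
  · rw [coeff_C_mul, coeff_X_pow, if_pos rfl, mul_one]
  · intro b _ hbt
    rw [coeff_C_mul, coeff_X_pow, if_neg (fun h => hbt h.symm), mul_zero]
  · intro h
    exact absurd (Finset.mem_range.mpr ht) h

lemma burstPoly_degree {F : Type*} [Semiring F] {n : ℕ} (e : Fin n → F) (a τ : ℕ) :
    (burstPoly e a τ).degree < (τ : WithBot ℕ) := by
  refine lt_of_le_of_lt (degree_sum_le _ _) ?_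
  rw [Finset.sup_lt_iff (by exact WithBot.bot_lt_coe τ)]
  intro t ht
  refine lt_of_le_of_lt (degree_C_mul_X_pow_le _ _) ?_
  exact_mod_cast WithBot.coe_lt_coe.mpr (Finset.mem_range.mp ht)

lemma burst_sum {F : Type*} [CommRing F] {n : ℕ} (e : Fin n → F) (a τ : ℕ)
    (hw : ∀ j : Fin n, e j ≠ 0 → a ≤ (j : ℕ) ∧ (j : ℕ) < a + τ)
    (α : F) (s : ℕ) :
    ∑ j : Fin n, α ^ (s * (j : ℕ)) * e j = α ^ (s * a) * (burstPoly e a τ).eval (α ^ s) := by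
  set G : ℕ → F := fun m => α ^ (s * m) * (if h : m < n then e ⟨m, h⟩ else 0) with hG
  have h1 : ∑ j : Fin n, α ^ (s * (j : ℕ)) * e j = ∑ m ∈ Finset.range n, G m := by
    rw [← Fin.sum_univ_eq_sum_range G n]
    refine Finset.sum_congr rfl fun j _ => ?_
    simp only [hG, dif_pos j.2]
  have h2 : ∑ m ∈ Finset.range n, G m = ∑ m ∈ Finset.range (n + (a + τ)), G m := by
    refine Finset.sum_subset (Finset.range_subset_range.mpr (Nat.le_add_right _ _)) ?_
    intro m _ hm
    have : ¬ m < n := fun h => hm (Finset.mem_range.mpr h)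
    simp only [hG, dif_neg this, mul_zero]
  have h3 : ∑ m ∈ Finset.Ico a (a + τ), G m = ∑ m ∈ Finset.range (n + (a + τ)), G m := by
    refine Finset.sum_subset ?_ ?_
    · intro m hm
      exact Finset.mem_range.mpr (lt_of_lt_of_le (Finset.mem_Ico.mp hm).2 (Nat.le_add_left _ _))
    · intro m _ hm
      by_cases hmn : m < n
      · have : e ⟨m, hmn⟩ = 0 := by
          by_contra hne
          obtain ⟨hl, hr⟩ := hw ⟨m, hmn⟩ hne
          exact hm (Finset.mem_Ico.mpr ⟨hl, hr⟩)
        simp only [hG, dif_pos hmn, this, mul_zero]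
      · simp only [hG, dif_neg hmn, mul_zero]
  have h4 : ∑ m ∈ Finset.Ico a (a + τ), G m = ∑ t ∈ Finset.range τ, G (a + t) := by
    rw [Finset.sum_Ico_eq_sum_range]
    simp only [Nat.add_sub_cancel_left]
  rw [h1, h2, ← h3, h4, burstPoly, eval_finset_sum, Finset.mul_sum]
  refine Finset.sum_congr rfl fun t _ => ?_
  simp only [hG, eval_mul, eval_C, eval_pow, eval_X]
  rw [← pow_mul, Nat.mul_add, pow_add]
  ring


end RSReigerAux

section RSReigerMain
open Polynomial Finset

/-- Reed–Solomon codes attain the generalized Reiger bound.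
Let `F = GF(q)`, let `α ∈ F` have multiplicative order `n`, let `0 < r < n`,
and let `H = (α^{sj})` (`0 ≤ s < r`, `0 ≤ j < n`) be the parity-check matrix of
the `[n, n-r]` Reed–Solomon code. If `ℓ, τ ≥ 1` and `r ≥ τ + ⌈τ/ℓ⌉`, then the
code has an `(ℓ,τ)`-burst list decoder: there do not exist `ℓ+1` distinct
`τ`-bursts in `F^n` with equal syndromes. -/
theorem RS_attains_Reiger (F : Type*) [Field F] [Fintype F] (n r τ ℓ : ℕ)
    (α : F) (hord : orderOf α = n) (hr0 : 0 < r) (hrn : r < n)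
    (hτ : 1 ≤ τ) (hℓ : 1 ≤ ℓ) (hbound : τ + (τ + ℓ - 1) / ℓ ≤ r) :
    ¬ ∃ e : Fin (ℓ + 1) → (Fin n → F), Function.Injective e ∧
        (∀ i, IsBurst τ (e i)) ∧
        ∀ i k, Matrix.mulVec
              (Matrix.of fun (s : Fin r) (j : Fin n) => α ^ ((s : ℕ) * (j : ℕ)))
              (e i) =
            Matrix.mulVec
              (Matrix.of fun (s : Fin r) (j : Fin n) => α ^ ((s : ℕ) * (j : ℕ)))
              (e k) := by
  rintro ⟨e, hinj, hburst, hsyn⟩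
  classical
  -- basic facts
  have hn0 : 0 < n := hr0.trans hrn
  have hα1 : α ^ n = 1 := by rw [← hord]; exact pow_orderOf_eq_one α
  have hα0 : α ≠ 0 := by
    intro h; rw [h, zero_pow hn0.ne'] at hα1; exact zero_ne_one hα1
  have hαu : IsUnit α := by
    refine IsUnit.of_mul_eq_one (a := α) (α ^ (n - 1)) ?_
    rw [← pow_succ']
    have hn1 : n - 1 + 1 = n := by omega
    rw [hn1, hα1]
  obtain ⟨U, hU⟩ := hαu
  have hUord : orderOf U = n := by rw [← orderOf_units, hU, hord]
  have hcast : ∀ x : ℕ, α ^ x = ((U ^ x : Fˣ) : F) := by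
    intro x; rw [← hU, Units.val_pow_eq_pow_val]
  have hpow : ∀ x y : ℕ, α ^ x = α ^ y ↔ x ≡ y [MOD n] := by
    intro x y
    rw [hcast x, hcast y, ← hUord]
    exact ⟨fun h => pow_eq_pow_iff_modEq.mp (Units.ext h),
      fun h => congrArg Units.val (pow_eq_pow_iff_modEq.mpr h)⟩
  have hpowinj : ∀ {x y : ℕ}, x < n → y < n → α ^ x = α ^ y → x = y := by
    intro x y hx hy hxy
    have := (hpow x y).mp hxy
    rwa [Nat.ModEq, Nat.mod_eq_of_lt hx, Nat.mod_eq_of_lt hy] at this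
  have hb1 : 1 ≤ (τ + ℓ - 1) / ℓ := (Nat.one_le_div_iff (by omega)).mpr (by omega)
  have hτr : τ < r := lt_of_lt_of_le (Nat.lt_add_of_pos_right hb1) hbound
  have hbr : (τ + ℓ - 1) / ℓ ≤ r - τ := Nat.le_sub_of_add_le (by rw [Nat.add_comm]; exact hbound)
  -- vanishing lemma
  have K : ∀ Q : Polynomial F, Q.degree < (r : WithBot ℕ) →
      (∀ s : Fin r, Q.eval (α ^ (s : ℕ)) = 0) → Q = 0 := by
    intro Q hdeg hev
    by_cases hQ : Q = 0
    · exact hQ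
    refine Polynomial.eq_zero_of_natDegree_lt_card_of_eval_eq_zero Q
      (f := fun s : Fin r => α ^ (s : ℕ)) ?_ hev ?_
    · intro s t hst
      exact Fin.ext (hpowinj (lt_trans s.2 hrn) (lt_trans t.2 hrn) hst)
    · rw [Fintype.card_fin]
      exact (natDegree_lt_iff_degree_lt hQ).mpr hdeg
  -- syndromes in sum form
  have hsynsum : ∀ i k (s : Fin r),
      ∑ j : Fin n, α ^ ((s : ℕ) * (j : ℕ)) * e i j
        = ∑ j : Fin n, α ^ ((s : ℕ) * (j : ℕ)) * e k j := by
    intro i k s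
    have := congrFun (hsyn i k) s
    simpa [Matrix.mulVec, dotProduct] using this
  -- bursts with vanishing burst polynomial are zero
  have hzero : ∀ (i : Fin (ℓ + 1)) (a : ℕ),
      (∀ j : Fin n, e i j ≠ 0 → a ≤ (j : ℕ) ∧ (j : ℕ) < a + τ) →
      (∀ s : Fin r, (burstPoly (e i) a τ).eval (α ^ (s : ℕ)) = 0) → e i = 0 := by
    intro i a hw hev
    have hB : burstPoly (e i) a τ = 0 :=
      K _ (lt_of_lt_of_le (burstPoly_degree _ _ _)
        (by exact_mod_cast Nat.cast_le.mpr hτr.le)) hev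
    funext j
    show e i j = 0
    by_contra hj
    obtain ⟨h1, h2⟩ := hw j hj
    have ht : (j : ℕ) - a < τ := by omega
    have hc := burstPoly_coeff (e i) a τ ht
    rw [hB, coeff_zero] at hc
    have hja : a + ((j : ℕ) - a) = (j : ℕ) := by omega
    rw [hja, dif_pos j.2] at hc
    simp only [Fin.eta] at hc
    exact hj hc.symm
  -- all bursts are nonzero
  have hne : ∀ i, e i ≠ 0 := by
    intro i hi
    obtain ⟨k, hk⟩ := Fintype.exists_ne_of_one_lt_card (by simp; omega) i
    obtain ⟨a, ha⟩ := hburst k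
    have hev : ∀ s : Fin r, (burstPoly (e k) a τ).eval (α ^ (s : ℕ)) = 0 := by
      intro s
      have h0 : ∑ j : Fin n, α ^ ((s : ℕ) * (j : ℕ)) * e k j = 0 := by
        rw [hsynsum k i s]; simp [hi]
      rw [burst_sum (e k) a τ ha α (s : ℕ)] at h0
      exact (mul_eq_zero.mp h0).resolve_left (pow_ne_zero _ hα0)
    exact hk (hinj ((hzero k a ha hev).trans hi.symm))
  -- minimal support index
  have hsne : ∀ i, (Finset.univ.filter (fun j => e i j ≠ 0)).Nonempty := by
    intro i
    obtain ⟨j, hj⟩ := Function.ne_iff.mp (hne i)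
    refine ⟨j, ?_⟩
    simp only [Finset.mem_filter, Finset.mem_univ, true_and]
    exact hj
  set aF : Fin (ℓ + 1) → Fin n :=
    fun i => (Finset.univ.filter (fun j => e i j ≠ 0)).min' (hsne i) with haF
  set a : Fin (ℓ + 1) → ℕ := fun i => (aF i : ℕ) with ha
  have han : ∀ i, a i < n := fun i => (aF i).2
  have haFne : ∀ i, e i (aF i) ≠ 0 := by
    intro i
    have := Finset.min'_mem _ (hsne i)
    simpa [haF] using this
  have haFmin : ∀ i (j : Fin n), e i j ≠ 0 → aF i ≤ j := by
    intro i j hj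
    exact Finset.min'_le _ _ (by simp [hj])
  have hwin : ∀ i (j : Fin n), e i j ≠ 0 → a i ≤ (j : ℕ) ∧ (j : ℕ) < a i + τ := by
    intro i j hj
    obtain ⟨w, hw⟩ := hburst i
    refine ⟨by exact_mod_cast haFmin i j hj, ?_⟩
    have h1 := (hw j hj).2
    have h2 := (hw (aF i) (haFne i)).1
    have h3 : a i = (aF i : ℕ) := rfl
    omega
  -- burst polynomials
  set B : Fin (ℓ + 1) → Polynomial F := fun i => burstPoly (e i) (a i) τ with hB
  have hBdeg : ∀ i, (B i).degree < (τ : WithBot ℕ) := fun i => burstPoly_degree _ _ _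
  have hBc0 : ∀ i, (B i).coeff 0 ≠ 0 := by
    intro i
    rw [hB]
    simp only
    rw [burstPoly_coeff _ _ _ hτ]
    have h : a i + 0 < n := by have := han i; omega
    rw [dif_pos h]
    have heq : (⟨a i + 0, h⟩ : Fin n) = aF i := Fin.ext (by simp [ha])
    rw [heq]
    exact haFne i
  -- syndrome relation for burst polynomials
  have hS : ∀ i k (s : Fin r),
      α ^ ((s : ℕ) * a i) * (B i).eval (α ^ (s : ℕ))
        = α ^ ((s : ℕ) * a k) * (B k).eval (α ^ (s : ℕ)) := by
    intro i k s
    rw [hB]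
    simp only
    rw [← burst_sum (e i) (a i) τ (hwin i) α (s : ℕ),
      ← burst_sum (e k) (a k) τ (hwin k) α (s : ℕ)]
    exact hsynsum i k s
  -- reconstruction
  have hrecon : ∀ i k, a i = a k → B i = B k → e i = e k := by
    intro i k hak hBik
    funext j
    show e i j = e k j
    by_cases hj : a i ≤ (j : ℕ) ∧ (j : ℕ) < a i + τ
    · have ht : (j : ℕ) - a i < τ := by omega
      have hja : a i + ((j : ℕ) - a i) = (j : ℕ) := by omega
      have h1 := burstPoly_coeff (e i) (a i) τ ht
      rw [hja, dif_pos j.2] at h1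
      have h2 := burstPoly_coeff (e k) (a k) τ ht
      rw [← hak, hja, dif_pos j.2] at h2
      simp only [Fin.eta] at h1 h2
      have hBik' : burstPoly (e i) (a i) τ = burstPoly (e k) (a k) τ := hBik
      rw [← hak] at hBik'
      rw [← h1, ← h2, hBik']
    · have h1 : e i j = 0 := by
        by_contra h; exact hj (hwin i j h)
      have h2 : e k j = 0 := by
        by_contra h
        refine hj ?_
        rw [hak]
        exact hwin k j h
      rw [h1, h2]
  -- the gap lemma: starting positions are cyclically far apart
  have hgap : ∀ i k, i ≠ k → ∀ d : ℕ, d ≤ r - τ → α ^ (a i) ≠ α ^ (a k) * α ^ d := by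
    intro i k hik d hd hcon
    have hcon' : α ^ (a i) = α ^ (a k + d) := by rw [pow_add]; exact hcon
    have hev : ∀ s : Fin r, (X ^ d * B i - B k).eval (α ^ (s : ℕ)) = 0 := by
      intro s
      have h2 : α ^ ((s : ℕ) * a i) = α ^ ((s : ℕ) * (a k + d)) := by
        rw [mul_comm (s : ℕ) (a i), pow_mul, hcon', ← pow_mul, mul_comm]
      have h1 := hS i k s
      rw [h2, Nat.mul_add, pow_add, mul_assoc] at h1
      have h3 := mul_left_cancel₀ (pow_ne_zero ((s : ℕ) * a k) hα0) h1
      rw [eval_sub, eval_mul, eval_pow, eval_X, ← pow_mul, h3, sub_self]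
    have hQdeg : (X ^ d * B i - B k).degree < (r : WithBot ℕ) := by
      refine lt_of_le_of_lt (degree_sub_le _ _) ?_
      rw [max_lt_iff]
      constructor
      · refine lt_of_le_of_lt (degree_mul_le _ _) ?_
        rw [degree_X_pow]
        calc ((d : ℕ) : WithBot ℕ) + (B i).degree
            < ((d : ℕ) : WithBot ℕ) + ((τ : ℕ) : WithBot ℕ) :=
              WithBot.add_lt_add_left (by exact WithBot.coe_ne_bot) (hBdeg i)
          _ = (((d + τ : ℕ)) : WithBot ℕ) := by push_cast; ring
          _ ≤ ((r : ℕ) : WithBot ℕ) := by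
              exact_mod_cast WithBot.coe_le_coe.mpr (by omega)
      · exact lt_trans (hBdeg k) (by exact_mod_cast WithBot.coe_lt_coe.mpr hτr)
    have hQ := K _ hQdeg hev
    by_cases hd0 : d = 0
    · subst hd0
      have hBik : B i = B k := by
        have := hQ
        rwa [pow_zero, one_mul, sub_eq_zero] at this
      have hai : a i = a k := by
        apply hpowinj (han i) (han k)
        rw [hcon', Nat.add_zero]
      exact hik (hinj (hrecon i k hai hBik))
    · have h0 : (X ^ d * B i - B k).coeff 0 = - (B k).coeff 0 := by
        rw [coeff_sub, mul_coeff_zero, coeff_X_pow, if_neg (fun h => hd0 h.symm)]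
        ring
      rw [hQ, coeff_zero] at h0
      exact hBc0 k (neg_eq_zero.mp h0.symm)
  -- the Lagrange functional polynomial
  set V : Fin r → F := fun s => α ^ (s : ℕ) with hV
  have hVinj : Function.Injective V :=
    fun s t h => Fin.ext (hpowinj (lt_trans s.2 hrn) (lt_trans t.2 hrn) h)
  set u : Fin r → F := fun s => ∏ t ∈ Finset.univ.erase s, (V s - V t)⁻¹ with hu
  have hune : ∀ s, u s ≠ 0 := by
    intro s
    rw [hu]
    refine Finset.prod_ne_zero_iff.mpr fun t ht => ?_
    exact inv_ne_zero (sub_ne_zero.mpr fun h => (Finset.mem_erase.mp ht).1 (hVinj h).symm)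
  set Sv : Fin r → F := fun s => α ^ ((s : ℕ) * a 0) * (B 0).eval (α ^ (s : ℕ)) with hSv
  set f : Polynomial F := ∑ s : Fin r, Polynomial.C (Sv s * u s) * X ^ (s : ℕ) with hf
  have hfdeg : f.degree < (r : WithBot ℕ) := by
    rw [hf]
    refine lt_of_le_of_lt (degree_sum_le _ _) ?_
    rw [Finset.sup_lt_iff (by exact WithBot.bot_lt_coe r)]
    intro s _
    refine lt_of_le_of_lt (degree_C_mul_X_pow_le _ _) ?_
    exact_mod_cast WithBot.coe_lt_coe.mpr s.2
  have hfcoeff : ∀ s : Fin r, f.coeff (s : ℕ) = Sv s * u s := by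
    intro s
    rw [hf, finset_sum_coeff, Finset.sum_eq_single s]
    · rw [coeff_C_mul, coeff_X_pow, if_pos rfl, mul_one]
    · intro t _ hts
      rw [coeff_C_mul, coeff_X_pow, if_neg (fun h => hts (Fin.ext h.symm)), mul_zero]
    · intro h
      exact absurd (Finset.mem_univ s) h
  have hfne : f ≠ 0 := by
    intro h0
    have hSv0 : ∀ s : Fin r, (B 0).eval (α ^ (s : ℕ)) = 0 := by
      intro s
      have hc := hfcoeff s
      rw [h0, coeff_zero] at hc
      have h1 : Sv s = 0 := by
        rcases mul_eq_zero.mp hc.symm with h | h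
        · exact h
        · exact absurd h (hune s)
      rw [hSv] at h1
      exact (mul_eq_zero.mp h1).resolve_left (pow_ne_zero _ hα0)
    have hB0 : B 0 = 0 :=
      K _ (lt_trans (hBdeg 0) (by exact_mod_cast WithBot.coe_lt_coe.mpr hτr)) hSv0
    exact hBc0 0 (by rw [hB0, coeff_zero])
  -- roots of f
  have hroots : ∀ (i : Fin (ℓ + 1)) (m : ℕ), m < r - τ →
      f.eval (α ^ (m + (n - a i))) = 0 := by
    intro i m hm
    have hai : a i < n := han i
    have heval : f.eval (α ^ (m + (n - a i)))
        = ∑ s : Fin r, ((X ^ m * B i).eval (V s)) * u s := by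
      rw [hf, eval_finset_sum]
      refine Finset.sum_congr rfl fun s _ => ?_
      rw [eval_mul, eval_C, eval_pow, eval_X]
      have hSvi : Sv s = α ^ ((s : ℕ) * a i) * (B i).eval (α ^ (s : ℕ)) := by
        rw [hSv]
        exact (hS i 0 s).symm
      rw [hSvi]
      have hp : α ^ ((s : ℕ) * a i) * (α ^ (m + (n - a i))) ^ (s : ℕ)
          = (α ^ (s : ℕ)) ^ m := by
        rw [← pow_mul, ← pow_add]
        have h1 : a i + (n - a i) = n := by omega
        have harith : (s : ℕ) * a i + (m + (n - a i)) * (s : ℕ)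
            = (s : ℕ) * m + n * (s : ℕ) := by
          calc (s : ℕ) * a i + (m + (n - a i)) * (s : ℕ)
              = (s : ℕ) * (a i + (n - a i)) + m * (s : ℕ) := by ring
            _ = (s : ℕ) * n + m * (s : ℕ) := by rw [h1]
            _ = (s : ℕ) * m + n * (s : ℕ) := by ring
        rw [harith, pow_add, pow_mul α n, hα1, one_pow, mul_one, pow_mul]
      have hVs : V s = α ^ (s : ℕ) := rfl
      rw [eval_mul, eval_pow, eval_X, hVs]
      linear_combination ((B i).eval (α ^ (s : ℕ)) * u s) * hp
    rw [heval, hu]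
    refine RS_lagrange_sum_zero V hVinj (X ^ m * B i) ?_
    refine lt_of_le_of_lt (degree_mul_le _ _) ?_
    rw [degree_X_pow]
    calc ((m : ℕ) : WithBot ℕ) + (B i).degree
        < ((m : ℕ) : WithBot ℕ) + ((τ : ℕ) : WithBot ℕ) :=
          WithBot.add_lt_add_left (by exact WithBot.coe_ne_bot) (hBdeg i)
      _ = (((m + τ : ℕ)) : WithBot ℕ) := by push_cast; ring
      _ ≤ (((r - 1 : ℕ)) : WithBot ℕ) := by
          exact_mod_cast WithBot.coe_le_coe.mpr (by omega)
  -- the root points are pairwise distinct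
  have hptinj : Function.Injective
      (fun p : Fin (ℓ + 1) × Fin (r - τ) => α ^ ((p.2 : ℕ) + (n - a p.1))) := by
    rintro ⟨i, m⟩ ⟨k, m'⟩ hpq
    simp only at hpq
    have hai : a i < n := han i
    have hak : a k < n := han k
    have key : α ^ ((m : ℕ) + a k) = α ^ ((m' : ℕ) + a i) := by
      have h1 : α ^ ((m : ℕ) + (n - a i)) * α ^ (a i + a k)
          = α ^ ((m : ℕ) + a k) * α ^ n := by
        rw [← pow_add, ← pow_add]; congr 1; omega
      have h2 : α ^ ((m' : ℕ) + (n - a k)) * α ^ (a i + a k)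
          = α ^ ((m' : ℕ) + a i) * α ^ n := by
        rw [← pow_add, ← pow_add]; congr 1; omega
      have h3 := congrArg (· * α ^ (a i + a k)) hpq
      rw [h1, h2, hα1, mul_one, mul_one] at h3
      exact h3
    by_cases hik : i = k
    · subst hik
      have hmm : (m : ℕ) = (m' : ℕ) := by
        have h4 : α ^ ((m : ℕ)) * α ^ (a i) = α ^ ((m' : ℕ)) * α ^ (a i) := by
          rw [← pow_add, ← pow_add]; exact key
        have h5 := mul_right_cancel₀ (pow_ne_zero (a i) hα0) h4
        exact hpowinj (by omega) (by omega) h5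
      exact Prod.ext rfl (Fin.ext hmm)
    · exfalso
      rcases le_total (m' : ℕ) (m : ℕ) with hmm | hmm
      · refine hgap i k hik ((m : ℕ) - (m' : ℕ)) (by omega) ?_
        have h6 : α ^ (a k + ((m : ℕ) - (m' : ℕ))) * α ^ (m' : ℕ)
            = α ^ (a i) * α ^ (m' : ℕ) := by
          rw [← pow_add, ← pow_add]
          rw [show a k + ((m : ℕ) - (m' : ℕ)) + (m' : ℕ) = (m : ℕ) + a k by omega]
          rw [show a i + (m' : ℕ) = (m' : ℕ) + a i by omega]
          exact key
        have h7 := mul_right_cancel₀ (pow_ne_zero (m' : ℕ) hα0) h6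
        rw [pow_add] at h7
        exact h7.symm
      · refine hgap k i (Ne.symm hik) ((m' : ℕ) - (m : ℕ)) (by omega) ?_
        have h6 : α ^ (a i + ((m' : ℕ) - (m : ℕ))) * α ^ (m : ℕ)
            = α ^ (a k) * α ^ (m : ℕ) := by
          rw [← pow_add, ← pow_add]
          rw [show a i + ((m' : ℕ) - (m : ℕ)) + (m : ℕ) = (m' : ℕ) + a i by omega]
          rw [show a k + (m : ℕ) = (m : ℕ) + a k by omega]
          exact key.symm
        have h7 := mul_right_cancel₀ (pow_ne_zero (m : ℕ) hα0) h6
        rw [pow_add] at h7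
        exact h7.symm
  -- counting roots
  have hcard : f.natDegree < Fintype.card (Fin (ℓ + 1) × Fin (r - τ)) := by
    have h1 : f.natDegree < r := (natDegree_lt_iff_degree_lt hfne).mpr hfdeg
    have h2 : r ≤ (ℓ + 1) * (r - τ) := by
      have h5 : τ ≤ ℓ * ((τ + ℓ - 1) / ℓ) := by
        have hdm := Nat.div_add_mod (τ + ℓ - 1) ℓ
        have hml : (τ + ℓ - 1) % ℓ < ℓ := Nat.mod_lt _ (by omega)
        revert hdm hml
        generalize ℓ * ((τ + ℓ - 1) / ℓ) = X
        generalize (τ + ℓ - 1) % ℓ = M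
        intro hdm hml
        omega
      calc r = τ + (r - τ) := by omega
        _ ≤ ℓ * ((τ + ℓ - 1) / ℓ) + (r - τ) := Nat.add_le_add_right h5 _
        _ ≤ ℓ * (r - τ) + (r - τ) := Nat.add_le_add_right (Nat.mul_le_mul_left ℓ hbr) _
        _ = (ℓ + 1) * (r - τ) := by ring
    rw [Fintype.card_prod, Fintype.card_fin, Fintype.card_fin]
    omega
  exact hfne (Polynomial.eq_zero_of_natDegree_lt_card_of_eval_eq_zero f hptinj
    (fun p => hroots p.1 (p.2 : ℕ) p.2.2) hcard)
end RSReigerMain
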